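/- Let p ∈ (0,1), β > 0, α ≥ 0, r > 0, ε ≥ 0 and ū ∈ ℝ. If v ∈ ℝ with |v| > ε is a local minimizer of Φ(w) = β·ψ_ε(w²) + (α/2)·w² + (1/(2r))·(w − ū)², then |v| ≥ (r·β·p·(1 − p)/(1 + α·r))^{1/(2−p)}. -/

import Mathlib

/-- The smooth approximation `ψ_ε` of `t ↦ t^{p/2}`:
`ψ_ε(t) = (p/2)·t/ε^{2−p} + (1 − p/2)·ε^p` for `0 ≤ t < ε²` and `ψ_ε(t) = t^{p/2}` for
`t ≥ ε²` (so `ψ_0(t) = t^{p/2}`). Exponents are real powers. -/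
noncomputable def psi (p ε t : ℝ) : ℝ :=
  if t < ε ^ 2 then p / 2 * t / ε ^ (2 - p) + (1 - p / 2) * ε ^ p
  else t ^ (p / 2)

lemma aux_pos (p β α r ε ubar : ℝ)
    (hp0 : 0 < p) (hp1 : p < 1) (hβ : 0 < β) (hα : 0 ≤ α) (hr : 0 < r) (hε : 0 ≤ ε)
    (v : ℝ) (hv : ε < v)
    (hmin : IsLocalMin (fun w : ℝ =>
      β * psi p ε (w ^ 2) + α / 2 * w ^ 2 + 1 / (2 * r) * (w - ubar) ^ 2) v) :
    (r * β * p * (1 - p) / (1 + α * r)) ^ ((1 : ℝ) / (2 - p)) ≤ v := by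
  have hv0 : 0 < v := lt_of_le_of_lt hε hv
  set F : ℝ → ℝ := fun w => β * w ^ p + α / 2 * w ^ 2 + 1 / (2 * r) * (w - ubar) ^ 2 with hFdef
  set G : ℝ → ℝ := fun w => β * p * w ^ (p - 1) + α * w + (w - ubar) / r with hGdef
  -- f agrees with F near v
  have hEq : (fun w : ℝ =>
      β * psi p ε (w ^ 2) + α / 2 * w ^ 2 + 1 / (2 * r) * (w - ubar) ^ 2) =ᶠ[nhds v] F := by
    have hmem : Set.Ioi ε ∈ nhds v := Ioi_mem_nhds hv
    filter_upwards [hmem] with w hw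
    have hw0 : (0:ℝ) < w := lt_of_le_of_lt hε hw
    have hsq : ¬ (w ^ 2 < ε ^ 2) := by
      push_neg
      exact pow_le_pow_left₀ hε (le_of_lt hw) 2
    have : psi p ε (w ^ 2) = w ^ p := by
      rw [psi, if_neg hsq]
      rw [← Real.rpow_natCast w 2, ← Real.rpow_mul hw0.le]
      norm_num
      congr 1
      ring
    rw [this]
  have hminF : IsLocalMin F v := hmin.congr hEq
  -- derivative of F
  have hF : ∀ w : ℝ, 0 < w → HasDerivAt F (G w) w := by
    intro w hw
    have h1 : HasDerivAt (fun w : ℝ => w ^ p) (p * w ^ (p - 1)) w :=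
      Real.hasDerivAt_rpow_const (Or.inl hw.ne')
    have h2 : HasDerivAt (fun w : ℝ => w ^ 2) (2 * w) w := by
      simpa using hasDerivAt_pow 2 w
    have h3 : HasDerivAt (fun w : ℝ => (w - ubar) ^ 2) (2 * (w - ubar)) w := by
      have := (hasDerivAt_pow 2 (w - ubar)).comp w ((hasDerivAt_id w).sub_const ubar)
      simpa [Function.comp_def] using this
    have h := ((h1.const_mul β).add (h2.const_mul (α / 2))).add (h3.const_mul (1 / (2 * r)))
    refine HasDerivAt.congr_deriv (f := F) h ?_
    show _ = β * p * w ^ (p - 1) + α * w + (w - ubar) / r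
    ring
  have hGv : G v = 0 := hminF.hasDerivAt_eq_zero (hF v hv0)
  -- derivative of G at v
  set K : ℝ := β * p * ((p - 1) * v ^ (p - 2)) + α + 1 / r with hKdef
  have hG : HasDerivAt G K v := by
    have h1 : HasDerivAt (fun w : ℝ => w ^ (p - 1)) ((p - 1) * v ^ (p - 1 - 1)) v :=
      Real.hasDerivAt_rpow_const (Or.inl hv0.ne')
    have h1' : HasDerivAt (fun w : ℝ => w ^ (p - 1)) ((p - 1) * v ^ (p - 2)) v := by
      convert h1 using 2; ring
    have h2 : HasDerivAt (fun w : ℝ => α * w) α v := by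
      simpa using (hasDerivAt_id v).const_mul α
    have h3 : HasDerivAt (fun w : ℝ => (w - ubar) / r) (1 / r) v := by
      simpa using ((hasDerivAt_id v).sub_const ubar).div_const r
    have h := ((h1'.const_mul (β * p)).add h2).add h3
    convert h using 1 <;> rfl
  -- second-order condition: 0 ≤ K
  have hK : 0 ≤ K := by
    by_contra hKneg
    push_neg at hKneg
    have hslope : Filter.Tendsto (slope G v) (nhdsWithin v {v}ᶜ) (nhds K) :=
      hasDerivAt_iff_tendsto_slope.mp hG
    have h1 : ∀ᶠ x in nhdsWithin v {v}ᶜ, slope G v x < 0 :=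
      hslope (Iio_mem_nhds hKneg)
    have hle : nhdsWithin v (Set.Ioi v) ≤ nhdsWithin v {v}ᶜ :=
      nhdsWithin_mono v (fun x hx => ne_of_gt hx)
    have h2 : ∀ᶠ x in nhdsWithin v (Set.Ioi v), G x < 0 := by
      filter_upwards [hle h1, self_mem_nhdsWithin] with x hx hxv
      have hxv' : (0:ℝ) < x - v := sub_pos.mpr hxv
      have : slope G v x = G x / (x - v) := by
        rw [slope_def_field, div_eq_div_iff (by linarith) (by linarith)]
        rw [hGv]; ring
      rw [this] at hx
      by_contra hGx
      push_neg at hGx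
      exact absurd (div_nonneg hGx hxv'.le) (not_le.mpr hx)
    have h3 : ∀ᶠ x in nhdsWithin v (Set.Ioi v), F v ≤ F x :=
      mem_nhdsWithin_of_mem_nhds hminF
    have h4 := h2.and h3
    rw [Filter.eventually_iff, mem_nhdsGT_iff_exists_Ioo_subset] at h4
    obtain ⟨b, hb, hsub⟩ := h4
    have hbmem : v < b := hb
    set x0 : ℝ := (v + b) / 2 with hx0def
    have hx0 : x0 ∈ Set.Ioo v b := ⟨by rw [hx0def]; linarith, by rw [hx0def]; linarith⟩
    have hanti : StrictAntiOn F (Set.Icc v x0) := by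
      apply strictAntiOn_of_deriv_neg (convex_Icc v x0)
      · intro x hx
        exact ((hF x (lt_of_lt_of_le hv0 hx.1)).continuousAt).continuousWithinAt
      · intro x hx
        rw [interior_Icc] at hx
        have hxI : x ∈ Set.Ioo v b := ⟨hx.1, lt_of_lt_of_le hx.2 (le_of_lt hx0.2)⟩
        rw [(hF x (lt_trans hv0 hx.1)).deriv]
        exact (hsub hxI).1
    have h5 : F x0 < F v :=
      hanti (Set.left_mem_Icc.mpr (le_of_lt hx0.1)) ⟨hx0.1.le, le_refl x0⟩ hx0.1
    exact absurd (hsub hx0).2 (not_le.mpr h5)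
  -- algebra: deduce the bound
  have hαr : (0:ℝ) < 1 + α * r := by positivity
  have hvp2 : v ^ (p - 2) * v ^ (2 - p) = 1 := by
    rw [← Real.rpow_add hv0]; norm_num
  have hvpow : (0:ℝ) < v ^ (2 - p) := Real.rpow_pos_of_pos hv0 _
  have hkey : r * β * p * (1 - p) / (1 + α * r) ≤ v ^ (2 - p) := by
    have h1 : β * p * (1 - p) * v ^ (p - 2) ≤ (1 + α * r) / r := by
      have h0 : β * p * (1 - p) * v ^ (p - 2) = -(β * p * ((p - 1) * v ^ (p - 2))) := by ring
      have hdiv : (1 + α * r) / r = α + 1 / r := by field_simp; ring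
      have hK' : 0 ≤ β * p * ((p - 1) * v ^ (p - 2)) + α + 1 / r := hKdef ▸ hK
      rw [h0, hdiv]
      linarith
    have h2 : β * p * (1 - p) ≤ (1 + α * r) / r * v ^ (2 - p) := by
      calc β * p * (1 - p) = β * p * (1 - p) * (v ^ (p - 2) * v ^ (2 - p)) := by
            rw [hvp2]; ring
        _ = (β * p * (1 - p) * v ^ (p - 2)) * v ^ (2 - p) := by ring
        _ ≤ (1 + α * r) / r * v ^ (2 - p) := by
            apply mul_le_mul_of_nonneg_right h1 hvpow.le
    rw [div_le_iff₀ hαr]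
    calc r * β * p * (1 - p) = r * (β * p * (1 - p)) := by ring
      _ ≤ r * ((1 + α * r) / r * v ^ (2 - p)) := by
          apply mul_le_mul_of_nonneg_left h2 hr.le
      _ = v ^ (2 - p) * (1 + α * r) := by field_simp
  have h1p : (0:ℝ) < 1 - p := by linarith
  have hA0 : (0:ℝ) ≤ r * β * p * (1 - p) / (1 + α * r) :=
    le_of_lt (div_pos (mul_pos (by positivity) h1p) hαr)
  have hexp : (0:ℝ) < 2 - p := by linarith
  calc (r * β * p * (1 - p) / (1 + α * r)) ^ ((1 : ℝ) / (2 - p))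
      ≤ (v ^ (2 - p)) ^ ((1 : ℝ) / (2 - p)) := by
        apply Real.rpow_le_rpow hA0 hkey (by positivity)
    _ = v := by
        rw [← Real.rpow_mul hv0.le, mul_one_div, div_self hexp.ne', Real.rpow_one]

/-- any local minimizer `v` of
`Φ(w) = β·ψ_ε(w²) + (α/2)·w² + (1/(2r))·(w − ū)²` with `|v| > ε` satisfies
`|v| ≥ (r·β·p·(1 − p)/(1 + α·r))^{1/(2−p)}`. -/
theorem localMin_lower_bound (p β α r ε ubar : ℝ)
    (hp0 : 0 < p) (hp1 : p < 1) (hβ : 0 < β) (hα : 0 ≤ α) (hr : 0 < r) (hε : 0 ≤ ε)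
    (v : ℝ) (hv : ε < |v|)
    (hmin : IsLocalMin (fun w : ℝ =>
      β * psi p ε (w ^ 2) + α / 2 * w ^ 2 + 1 / (2 * r) * (w - ubar) ^ 2) v) :
    (r * β * p * (1 - p) / (1 + α * r)) ^ ((1 : ℝ) / (2 - p)) ≤ |v| := by
  rcases le_or_gt 0 v with hv0 | hv0
  · rw [abs_of_nonneg hv0] at hv ⊢
    exact aux_pos p β α r ε ubar hp0 hp1 hβ hα hr hε v hv hmin
  · rw [abs_of_neg hv0] at hv ⊢
    have hmin' : IsLocalMin ((fun w : ℝ =>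
        β * psi p ε (w ^ 2) + α / 2 * w ^ 2 + 1 / (2 * r) * (w - ubar) ^ 2) ∘ Neg.neg)
        (-v) := by
      apply IsLocalMin.comp_continuous _ continuous_neg.continuousAt
      rw [neg_neg]; exact hmin
    have hmin'' : IsLocalMin (fun w : ℝ =>
        β * psi p ε (w ^ 2) + α / 2 * w ^ 2 + 1 / (2 * r) * (w - (-ubar)) ^ 2) (-v) := by
      apply hmin'.congr
      apply Filter.Eventually.of_forall
      intro w
      simp only [Function.comp_apply, neg_sq]
      ring_nf
    exact aux_pos p β α r ε (-ubar) hp0 hp1 hβ hα hr hε (-v) hv hmin''
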